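/- The set of 2×2 unitary matrices W satisfying W = k·W† for some complex scalar k (possibly depending on W) is not closed under matrix multiplication: there exist unitaries W₁, W₂, each satisfying Wᵢ = kᵢ·Wᵢ† for some scalars kᵢ, such that W₁W₂ ≠ k·(W₁W₂)† for every complex scalar k. -/
import Mathlib


open Matrix Complex

theorem zero_discord_unitaries_not_closed_under_mul :
    ∃ W₁ W₂ : Matrix (Fin 2) (Fin 2) ℂ,
      W₁ ∈ Matrix.unitaryGroup (Fin 2) ℂ ∧
      W₂ ∈ Matrix.unitaryGroup (Fin 2) ℂ ∧
      (∃ k₁ : ℂ, W₁ = k₁ • W₁ᴴ) ∧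
      (∃ k₂ : ℂ, W₂ = k₂ • W₂ᴴ) ∧
      ∀ k : ℂ, W₁ * W₂ ≠ k • (W₁ * W₂)ᴴ := by
  refine ⟨!![0,1;1,0], !![0, ⟨3/5, -4/5⟩; ⟨3/5, 4/5⟩, 0], ?_, ?_, ⟨1, ?_⟩, ⟨1, ?_⟩, ?_⟩
  · rw [Matrix.mem_unitaryGroup_iff]
    ext i j
    fin_cases i <;> fin_cases j <;>
      simp [Matrix.mul_apply, Fin.sum_univ_two, star_eq_conjTranspose, conjTranspose_apply]
  · rw [Matrix.mem_unitaryGroup_iff]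
    ext i j
    fin_cases i <;> fin_cases j <;>
      simp [Matrix.mul_apply, Fin.sum_univ_two, star_eq_conjTranspose,
        conjTranspose_apply, Complex.ext_iff, Complex.mul_re, Complex.mul_im] <;> norm_num
  · ext i j
    fin_cases i <;> fin_cases j <;> simp [conjTranspose_apply]
  · ext i j
    fin_cases i <;> fin_cases j <;>
      simp [conjTranspose_apply, Complex.ext_iff] <;> norm_num
  · intro k h
    have h00 := congrFun (congrFun h 0) 0
    have h11 := congrFun (congrFun h 1) 1
    simp [Matrix.mul_apply, Fin.sum_univ_two, conjTranspose_apply, Complex.ext_iff,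
      Complex.mul_re, Complex.mul_im] at h00 h11
    obtain ⟨a, b⟩ := h00
    obtain ⟨c, d⟩ := h11
    nlinarith [sq_nonneg k.re, sq_nonneg k.im]
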